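/- Let ν₁ ≠ ν₂ be finite signed measures on ℝ (arising as ρ(z)νᵢ(dz) for Lévy measures νᵢ integrating ρ), let θ₀ ∈ (0,1), and define N_i(t) = νᵢ((−∞, t]) for i = 1,2 and V₀ = sup_{t∈ℝ} |N₁(t) − N₂(t)| > 0. For 0 ≤ s ≤ θ ≤ 1 and t ∈ ℝ set D(s, θ, t) = F(s, t) − (s/θ)·F(θ, t), where F(s, t) = min(s, θ₀)·N₁(t) + max(s − θ₀, 0)·N₂(t) (with the convention 0/0 = 1). Then for every θ ∈ (θ₀, 1]: sup_{t∈ℝ} sup_{0 ≤ s ≤ θ' ≤ θ} |D(s, θ', t)| = V₀·θ₀·(1 − θ₀/θ). -/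

import Mathlib

open MeasureTheory

lemma sm_apply_jordan (ν : SignedMeasure ℝ) {s : Set ℝ} (hs : MeasurableSet s) :
    ν s = (ν.toJordanDecomposition.posPart s).toReal
        - (ν.toJordanDecomposition.negPart s).toReal := by
  conv_lhs => rw [← ν.toSignedMeasure_toJordanDecomposition]
  rw [JordanDecomposition.toSignedMeasure, VectorMeasure.sub_apply,
    Measure.toSignedMeasure_apply_measurable hs, Measure.toSignedMeasure_apply_measurable hs]
  rfl

lemma sm_ext_iic (ν₁ ν₂ : SignedMeasure ℝ)
    (h : ∀ t, ν₁ (Set.Iic t) = ν₂ (Set.Iic t)) : ν₁ = ν₂ := by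
  set p₁ := ν₁.toJordanDecomposition.posPart
  set n₁ := ν₁.toJordanDecomposition.negPart
  set p₂ := ν₂.toJordanDecomposition.posPart
  set n₂ := ν₂.toJordanDecomposition.negPart
  have hμ : p₁ + n₂ = p₂ + n₁ := by
    apply Measure.ext_of_Iic
    intro a
    have h1 := h a
    rw [sm_apply_jordan ν₁ measurableSet_Iic, sm_apply_jordan ν₂ measurableSet_Iic] at h1
    simp only [Measure.add_apply]
    have f1 : p₁ (Set.Iic a) ≠ ⊤ := measure_ne_top _ _
    have f2 : n₁ (Set.Iic a) ≠ ⊤ := measure_ne_top _ _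
    have f3 : p₂ (Set.Iic a) ≠ ⊤ := measure_ne_top _ _
    have f4 : n₂ (Set.Iic a) ≠ ⊤ := measure_ne_top _ _
    rw [← ENNReal.toReal_eq_toReal_iff' (by finiteness) (by finiteness)]
    rw [ENNReal.toReal_add f1 f4, ENNReal.toReal_add f3 f2]
    linarith
  ext i hi
  rw [sm_apply_jordan ν₁ hi, sm_apply_jordan ν₂ hi]
  have : p₁ i + n₂ i = p₂ i + n₁ i := by rw [← Measure.add_apply, ← Measure.add_apply, hμ]
  have f1 : p₁ i ≠ ⊤ := measure_ne_top _ _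
  have f2 : n₁ i ≠ ⊤ := measure_ne_top _ _
  have f3 : p₂ i ≠ ⊤ := measure_ne_top _ _
  have f4 : n₂ i ≠ ⊤ := measure_ne_top _ _
  have := congrArg ENNReal.toReal this
  rw [ENNReal.toReal_add f1 f4, ENNReal.toReal_add f3 f2] at this
  linarith

lemma sm_apply_abs_le (ν : SignedMeasure ℝ) {s : Set ℝ} (hs : MeasurableSet s) :
    |ν s| ≤ (ν.toJordanDecomposition.posPart Set.univ).toReal
          + (ν.toJordanDecomposition.negPart Set.univ).toReal := by
  rw [sm_apply_jordan ν hs]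
  have h1 : (ν.toJordanDecomposition.posPart s).toReal
      ≤ (ν.toJordanDecomposition.posPart Set.univ).toReal :=
    ENNReal.toReal_mono (measure_ne_top _ _) (measure_mono (Set.subset_univ s))
  have h2 : (ν.toJordanDecomposition.negPart s).toReal
      ≤ (ν.toJordanDecomposition.negPart Set.univ).toReal :=
    ENNReal.toReal_mono (measure_ne_top _ _) (measure_mono (Set.subset_univ s))
  have h3 : 0 ≤ (ν.toJordanDecomposition.posPart s).toReal := ENNReal.toReal_nonneg
  have h4 : 0 ≤ (ν.toJordanDecomposition.negPart s).toReal := ENNReal.toReal_nonneg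
  rw [abs_sub_le_iff]; constructor <;> linarith

/-- Example 4.1 of the paper: for the abrupt-change kernel built from two distinct finite
signed measures `ν₁ ≠ ν₂` with distribution functions `N₁, N₂`, the measure of time
variation satisfies, for every `θ ∈ (θ₀, 1]`,
`sup_{t} sup_{0 ≤ s ≤ θ' ≤ θ} |D(s, θ', t)| = V₀ θ₀ (1 − θ₀/θ)`,
where `V₀ = sup_t |N₁(t) − N₂(t)| > 0`. -/
theorem abrupt_change_time_variation
    (ν₁ ν₂ : MeasureTheory.SignedMeasure ℝ) (hne : ν₁ ≠ ν₂)
    (θ₀ : ℝ) (h0 : 0 < θ₀) (h1 : θ₀ < 1)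
    (N₁ N₂ : ℝ → ℝ)
    (hN₁ : ∀ t : ℝ, N₁ t = ν₁ (Set.Iic t)) (hN₂ : ∀ t : ℝ, N₂ t = ν₂ (Set.Iic t))
    (V₀ : ℝ) (hV₀ : V₀ = sSup (Set.range fun t : ℝ => |N₁ t - N₂ t|))
    (F : ℝ → ℝ → ℝ) (hF : ∀ s t : ℝ, F s t = min s θ₀ * N₁ t + max (s - θ₀) 0 * N₂ t)
    (D : ℝ → ℝ → ℝ → ℝ) (hD : ∀ s θ t : ℝ, D s θ t = F s t - (s / θ) * F θ t) :
    0 < V₀ ∧ ∀ θ : ℝ, θ₀ < θ → θ ≤ 1 →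
      sSup {r : ℝ | ∃ t s θ' : ℝ, 0 ≤ s ∧ s ≤ θ' ∧ θ' ≤ θ ∧ r = |D s θ' t|} =
        V₀ * θ₀ * (1 - θ₀ / θ) := by
  -- boundedness of |N₁ - N₂|
  set M : ℝ := (ν₁.toJordanDecomposition.posPart Set.univ).toReal
      + (ν₁.toJordanDecomposition.negPart Set.univ).toReal
      + ((ν₂.toJordanDecomposition.posPart Set.univ).toReal
      + (ν₂.toJordanDecomposition.negPart Set.univ).toReal) with hM
  have hboundN : ∀ t, |N₁ t - N₂ t| ≤ M := by
    intro t
    have h1' := sm_apply_abs_le ν₁ (measurableSet_Iic (a := t))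
    have h2' := sm_apply_abs_le ν₂ (measurableSet_Iic (a := t))
    rw [← hN₁ t] at h1'; rw [← hN₂ t] at h2'
    calc |N₁ t - N₂ t| ≤ |N₁ t| + |N₂ t| := abs_sub _ _
      _ ≤ M := by rw [hM]; linarith
  have hbdd : BddAbove (Set.range fun t : ℝ => |N₁ t - N₂ t|) := by
    refine ⟨M, ?_⟩; rintro x ⟨t, rfl⟩; exact hboundN t
  -- existence of a point where N₁ ≠ N₂
  have hex : ∃ t, N₁ t ≠ N₂ t := by
    by_contra hc
    push_neg at hc
    exact hne (sm_ext_iic ν₁ ν₂ (fun t => by rw [← hN₁ t, ← hN₂ t, hc t]))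
  obtain ⟨t₀, ht₀⟩ := hex
  have hVle : ∀ t, |N₁ t - N₂ t| ≤ V₀ := by
    intro t; rw [hV₀]; exact le_csSup hbdd ⟨t, rfl⟩
  have hVpos : 0 < V₀ :=
    lt_of_lt_of_le (abs_pos.mpr (sub_ne_zero.mpr ht₀)) (hVle t₀)
  refine ⟨hVpos, ?_⟩
  intro θ hθ₀ hθ1
  have hθpos : (0:ℝ) < θ := lt_trans h0 hθ₀
  set c : ℝ := θ₀ * (1 - θ₀ / θ) with hc
  have hcpos : 0 < c := by
    apply mul_pos h0
    have : θ₀ / θ < 1 := (div_lt_one hθpos).mpr hθ₀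
    linarith
  -- pointwise bound
  have key : ∀ t s θ' : ℝ, 0 ≤ s → s ≤ θ' → θ' ≤ θ →
      |D s θ' t| ≤ c * |N₁ t - N₂ t| := by
    intro t s θ' hs hsθ' hθ'θ
    have hcN : 0 ≤ c * |N₁ t - N₂ t| := mul_nonneg hcpos.le (abs_nonneg _)
    rcases le_or_gt θ' θ₀ with hle | hgt
    · -- θ' ≤ θ₀ : D = 0
      have hFs : F s t = s * N₁ t := by
        rw [hF]; rw [min_eq_left (le_trans hsθ' hle),
          max_eq_right (by linarith : s - θ₀ ≤ 0)]; ring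
      have hFθ' : F θ' t = θ' * N₁ t := by
        rw [hF]; rw [min_eq_left hle, max_eq_right (by linarith : θ' - θ₀ ≤ 0)]; ring
      rcases eq_or_lt_of_le hs with hs0 | hs0
      · rw [hD, hFs, ← hs0]
        simp [hcN]
      · have hθ'pos : 0 < θ' := lt_of_lt_of_le hs0 hsθ'
        have heq : s / θ' * (θ' * N₁ t) = s * N₁ t := by
          field_simp
        rw [hD, hFs, hFθ', heq]
        simp [hcN]
    · -- θ₀ < θ'
      have hθ'pos : 0 < θ' := lt_trans h0 hgt
      have hFθ' : F θ' t = θ₀ * N₁ t + (θ' - θ₀) * N₂ t := by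
        rw [hF, min_eq_right hgt.le, max_eq_left (by linarith : (0:ℝ) ≤ θ' - θ₀)]
      have hmono : θ₀ * (1 - θ₀ / θ') ≤ c := by
        rw [hc]
        apply mul_le_mul_of_nonneg_left _ h0.le
        have : θ₀ / θ ≤ θ₀ / θ' := div_le_div_of_nonneg_left h0.le hθ'pos hθ'θ
        linarith
      rcases le_or_gt s θ₀ with hsle | hsgt
      · -- s ≤ θ₀ < θ'
        have hFs : F s t = s * N₁ t := by
          rw [hF, min_eq_left hsle, max_eq_right (by linarith : s - θ₀ ≤ 0)]; ring
        have hDval : D s θ' t = (s * (θ' - θ₀) / θ') * (N₁ t - N₂ t) := by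
          rw [hD, hFs, hFθ']; field_simp; ring
        have hk : 0 ≤ s * (θ' - θ₀) / θ' :=
          div_nonneg (mul_nonneg hs (by linarith)) hθ'pos.le
        have hkc : s * (θ' - θ₀) / θ' ≤ c := by
          calc s * (θ' - θ₀) / θ' ≤ θ₀ * (θ' - θ₀) / θ' := by
                gcongr <;> linarith
            _ = θ₀ * (1 - θ₀ / θ') := by field_simp
            _ ≤ c := hmono
        rw [hDval, abs_mul, abs_of_nonneg hk]
        exact mul_le_mul_of_nonneg_right hkc (abs_nonneg _) |>.trans
          (le_of_eq rfl)
      · -- θ₀ < s ≤ θ'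
        have hFs : F s t = θ₀ * N₁ t + (s - θ₀) * N₂ t := by
          rw [hF, min_eq_right hsgt.le, max_eq_left (by linarith : (0:ℝ) ≤ s - θ₀)]
        have hDval : D s θ' t = (θ₀ * (θ' - s) / θ') * (N₁ t - N₂ t) := by
          rw [hD, hFs, hFθ']; field_simp; ring
        have hk : 0 ≤ θ₀ * (θ' - s) / θ' :=
          div_nonneg (mul_nonneg h0.le (by linarith)) hθ'pos.le
        have hkc : θ₀ * (θ' - s) / θ' ≤ c := by
          calc θ₀ * (θ' - s) / θ' ≤ θ₀ * (θ' - θ₀) / θ' := by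
                gcongr <;> linarith
            _ = θ₀ * (1 - θ₀ / θ') := by field_simp
            _ ≤ c := hmono
        rw [hDval, abs_mul, abs_of_nonneg hk]
        exact mul_le_mul_of_nonneg_right hkc (abs_nonneg _)
  -- equality witness
  have hwit : ∀ t : ℝ, D θ₀ θ t = c * (N₁ t - N₂ t) := by
    intro t
    have hFθ₀ : F θ₀ t = θ₀ * N₁ t := by
      rw [hF, min_self, sub_self, max_self]; ring
    have hFθ : F θ t = θ₀ * N₁ t + (θ - θ₀) * N₂ t := by
      rw [hF, min_eq_right hθ₀.le, max_eq_left (by linarith : (0:ℝ) ≤ θ - θ₀)]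
    rw [hD, hFθ₀, hFθ, hc]; field_simp; ring
  set S := {r : ℝ | ∃ t s θ' : ℝ, 0 ≤ s ∧ s ≤ θ' ∧ θ' ≤ θ ∧ r = |D s θ' t|} with hS
  have hSbdd : BddAbove S := by
    refine ⟨c * V₀, ?_⟩
    rintro r ⟨t, s, θ', hs, hsθ', hθ'θ, rfl⟩
    exact (key t s θ' hs hsθ' hθ'θ).trans
      (mul_le_mul_of_nonneg_left (hVle t) hcpos.le)
  have hSmem : ∀ t : ℝ, c * |N₁ t - N₂ t| ∈ S := by
    intro t
    exact ⟨t, θ₀, θ, h0.le, hθ₀.le, le_refl θ, by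
      rw [hwit t, abs_mul, abs_of_nonneg hcpos.le]⟩
  have hSnonneg : 0 ≤ sSup S := by
    have h0S : c * |N₁ t₀ - N₂ t₀| ∈ S := hSmem t₀
    exact le_trans (mul_nonneg hcpos.le (abs_nonneg _)) (le_csSup hSbdd h0S)
  apply le_antisymm
  · apply Real.sSup_le
    · rintro r ⟨t, s, θ', hs, hsθ', hθ'θ, rfl⟩
      calc |D s θ' t| ≤ c * |N₁ t - N₂ t| := key t s θ' hs hsθ' hθ'θ
        _ ≤ c * V₀ := mul_le_mul_of_nonneg_left (hVle t) hcpos.le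
        _ = V₀ * θ₀ * (1 - θ₀ / θ) := by rw [hc]; ring
    · have : 0 ≤ c * V₀ := mul_nonneg hcpos.le hVpos.le
      rw [hc] at this; linarith [this]
  · have hV : V₀ ≤ sSup S / c := by
      rw [hV₀]
      apply Real.sSup_le
      · rintro x ⟨t, rfl⟩
        rw [le_div_iff₀ hcpos, mul_comm]
        exact le_csSup hSbdd (hSmem t)
      · exact div_nonneg hSnonneg hcpos.le
    calc V₀ * θ₀ * (1 - θ₀ / θ) = V₀ * c := by rw [hc]; ring
      _ ≤ sSup S := (le_div_iff₀ hcpos).mp hV
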